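/- Let R be a Noetherian commutative ring, I \subseteq R an ideal, and suppose R is I-adically complete. Suppose given for each n \ge 1 a finitely generated R/I^n-module M_n together with isomorphisms M_{n+1} \otimes_{R/I^{n+1}} R/I^n \cong M_n compatible with composition. Then M = \varprojlim_n M_n is a finitely generated R-module and the natural maps M/I^n M \to M_n are isomorphisms for all n. -/

import Mathlib

universe u

open Submodule

/-- Nakayama for nilpotently-acting ideals. -/
lemma aux_nak {R : Type*} [CommRing R] {M : Type*} [AddCommGroup M] [Module R M] (I : Ideal R)
    {P : Submodule R M} (h : P ⊔ I • ⊤ = ⊤) {k : ℕ} (hk : (I ^ k • ⊤ : Submodule R M) = ⊥) :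
    P = ⊤ := by
  have key : ∀ m : ℕ, (⊤ : Submodule R M) = P ⊔ I ^ (m + 1) • ⊤ := by
    intro m
    induction m with
    | zero => simpa [pow_one] using h.symm
    | succ m ih =>
      have h2 : (I ^ (m + 1) • ⊤ : Submodule R M) ≤ P ⊔ I ^ (m + 2) • ⊤ := by
        calc (I ^ (m + 1) • ⊤ : Submodule R M) = I ^ (m + 1) • (P ⊔ I • ⊤) := by rw [h]
          _ = I ^ (m + 1) • P ⊔ I ^ (m + 1) • (I • ⊤) := by rw [smul_sup]
          _ ≤ P ⊔ I ^ (m + 2) • ⊤ := by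
              apply sup_le_sup (smul_le_right)
              rw [show I ^ (m + 2) = I ^ (m + 1) * I by ring, mul_smul]
      apply le_antisymm _ le_top
      calc (⊤ : Submodule R M) = P ⊔ I ^ (m + 1) • ⊤ := ih
        _ ≤ P ⊔ (P ⊔ I ^ (m + 2) • ⊤) := sup_le_sup le_rfl h2
        _ = P ⊔ I ^ (m + 2) • ⊤ := by rw [← sup_assoc, sup_idem]
  have hk1 : (I ^ (k + 1) • ⊤ : Submodule R M) = ⊥ := by
    apply le_bot_iff.mp
    rw [← hk]
    exact smul_mono_left (Ideal.pow_le_pow_right (Nat.le_succ k))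
  rw [eq_top_iff, key k, hk1, sup_bot_eq]

/-- Precompleteness of finite pi types. -/
lemma aux_precomplete_pi {R : Type*} [CommRing R] (I : Ideal R) [IsPrecomplete I R]
    (ι : Type*) [Fintype ι] : IsPrecomplete I (ι → R) := by
  constructor
  intro g hg
  classical
  have hcomp : ∀ i : ι, ∃ L : R, ∀ n, g n i ≡ L [SMOD (I ^ n • ⊤ : Submodule R R)] := by
    intro i
    apply IsPrecomplete.prec ‹IsPrecomplete I R›
    intro m n hmn
    have := hg hmn
    rw [SModEq.sub_mem] at this ⊢
    have : (g m - g n) i ∈ (I ^ m • ⊤ : Submodule R (ι → R)).map (LinearMap.proj i) :=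
      ⟨g m - g n, this, rfl⟩
    rwa [Submodule.map_smul'', Submodule.map_top, LinearMap.range_eq_top.mpr
      (fun x => ⟨fun _ => x, rfl⟩)] at this
  choose L hL using hcomp
  refine ⟨L, fun n => ?_⟩
  rw [SModEq.sub_mem]
  have : (g n - L) = ∑ i : ι, Pi.single i ((g n - L) i) := by
    exact (Finset.univ_sum_single _).symm
  rw [this]
  apply Submodule.sum_mem
  intro i _
  have hi : (g n - L) i ∈ (I ^ n • ⊤ : Submodule R R) := by
    have := hL i n
    rw [SModEq.sub_mem] at this
    simpa using this
  have hmem : (Pi.single i ((g n - L) i) : ι → R) ∈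
      (I ^ n • ⊤ : Submodule R R).map (LinearMap.single R (fun _ : ι => R) i) :=
    ⟨_, hi, rfl⟩
  rw [Submodule.map_smul''] at hmem
  exact smul_mono_right (I ^ n) (le_top : Submodule.map _ ⊤ ≤ ⊤) hmem



/-- Grothendieck existence, essential surjectivity (affine case): over a Noetherian
`I`-adically complete ring `R`, every compatible system of finitely generated
`R/Iⁿ⁺¹`-modules `Mₙ` (i.e. `Iⁿ⁺¹ Mₙ = 0`, with surjections `Mₙ₊₁ → Mₙ` of kernel
`Iⁿ⁺¹ Mₙ₊₁`) algebrizes: there is a finitely generated `R`-module `N` with compatible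
surjections `N → Mₙ` of kernel `Iⁿ⁺¹ N`, i.e. `N/Iⁿ⁺¹N ≅ Mₙ` for all `n`. -/
theorem coherent_system_algebrizes
    {R : Type u} [CommRing R] [IsNoetherianRing R] (I : Ideal R) [IsAdicComplete I R]
    (M : ℕ → Type u) [∀ n, AddCommGroup (M n)] [∀ n, Module R (M n)]
    (hfg : ∀ n, (⊤ : Submodule R (M n)).FG)
    (hkill : ∀ n, (I ^ (n + 1) • ⊤ : Submodule R (M n)) = ⊥)
    (f : ∀ n, M (n + 1) →ₗ[R] M n)
    (hsurj : ∀ n, Function.Surjective (f n))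
    (hker : ∀ n, LinearMap.ker (f n) = (I ^ (n + 1) • ⊤ : Submodule R (M (n + 1)))) :
    ∃ N : ModuleCat.{u} R,
      (⊤ : Submodule R N).FG ∧
      ∃ π : ∀ n, (N : Type u) →ₗ[R] M n,
        (∀ n, Function.Surjective (π n)) ∧
        (∀ n, LinearMap.ker (π n) = (I ^ (n + 1) • ⊤ : Submodule R N)) ∧
        (∀ n, (f n).comp (π (n + 1)) = π n) := by
  classical
  -- sections of the transition maps
  let g : ∀ n, M n → M (n + 1) := fun n => Function.surjInv (hsurj n)
  have hg : ∀ n x, f n (g n x) = x := fun n => Function.surjInv_eq (hsurj n)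
  -- compatible lifts of elements of `M 0`
  let lift : M 0 → ∀ n, M n := fun m n => Nat.rec m (fun k x => g k x) n
  have hliftc : ∀ m n, f n (lift m (n + 1)) = lift m n := fun m n => hg n _
  -- generators of M 0
  obtain ⟨s, hs⟩ := hfg 0
  set F := (↥s → R) with hF
  -- the compatible maps from the free module F
  let φ : ∀ n, F →ₗ[R] M n := fun n =>
    Fintype.linearCombination R (fun i : ↥s => lift (i : M 0) n)
  have hφc : ∀ n, (f n).comp (φ (n + 1)) = φ n := by
    intro n
    apply LinearMap.ext
    intro r
    show f n (Fintype.linearCombination R (fun i : ↥s => lift (i : M 0) (n + 1)) r) =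
      Fintype.linearCombination R (fun i : ↥s => lift (i : M 0) n) r
    rw [Fintype.linearCombination_apply, Fintype.linearCombination_apply, map_sum]
    exact Finset.sum_congr rfl fun i _ => by rw [map_smul, hliftc]
  have hφ0 : LinearMap.range (φ 0) = ⊤ := by
    rw [eq_top_iff, ← hs, Submodule.span_le]
    intro x hx
    refine ⟨Pi.single (⟨x, hx⟩ : ↥s) 1, ?_⟩
    show Fintype.linearCombination R (fun i : ↥s => lift (i : M 0) 0) (Pi.single ⟨x, hx⟩ 1) = x
    rw [Fintype.linearCombination_apply_single, one_smul]
    rfl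
  -- the composite maps `M n → M 0`
  let c : ∀ n, M n →ₗ[R] M 0 := fun n =>
    Nat.rec LinearMap.id (fun k ck => ck.comp (f k)) n
  have hcφ : ∀ n, (c n).comp (φ n) = φ 0 := by
    intro n
    induction n with
    | zero => rfl
    | succ n ih =>
      show ((c n).comp (f n)).comp (φ (n + 1)) = φ 0
      rw [LinearMap.comp_assoc, hφc, ih]
  have hmapsmul : ∀ n (J : Ideal R),
      (J • ⊤ : Submodule R (M (n+1))).map (f n) = (J • ⊤ : Submodule R (M n)) := by
    intro n J
    rw [Submodule.map_smul'', Submodule.map_top, LinearMap.range_eq_top.mpr (hsurj n)]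
  have hcker : ∀ n, LinearMap.ker (c n) ≤ (I • ⊤ : Submodule R (M n)) := by
    intro n
    induction n with
    | zero => show LinearMap.ker LinearMap.id ≤ _; simp
    | succ n ih =>
      show LinearMap.ker ((c n).comp (f n)) ≤ _
      rw [LinearMap.ker_comp]
      refine le_trans (Submodule.comap_mono ih) ?_
      rw [← hmapsmul n I, Submodule.comap_map_eq, hker n]
      exact sup_le le_rfl (Submodule.smul_mono_left (Ideal.pow_le_self (Nat.succ_ne_zero n)))
  -- surjectivity of φ n
  have hφsurj : ∀ n, Function.Surjective (φ n) := by
    intro n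
    rw [← LinearMap.range_eq_top]
    apply aux_nak I _ (hkill n)
    rw [eq_top_iff]
    intro x _
    have : c n x ∈ LinearMap.range (φ 0) := hφ0 ▸ Submodule.mem_top
    obtain ⟨r, hr⟩ := this
    have hxr : x - φ n r ∈ LinearMap.ker (c n) := by
      rw [LinearMap.mem_ker, map_sub, ← LinearMap.comp_apply, hcφ n, hr, sub_self]
    have : x = φ n r + (x - φ n r) := by abel
    rw [this]
    exact Submodule.add_mem_sup (LinearMap.mem_range_self _ r) (hcker n hxr)
  -- kernels
  set K : ℕ → Submodule R F := fun n => LinearMap.ker (φ n) with hKdef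
  have hK : ∀ n, K n = K (n + 1) ⊔ (I ^ (n + 1) • ⊤ : Submodule R F) := by
    intro n
    have h1 : K n = Submodule.comap (φ (n+1)) (LinearMap.ker (f n)) := by
      show LinearMap.ker (φ n) = _
      rw [← hφc n, LinearMap.ker_comp]
    have h2 : (I ^ (n+1) • ⊤ : Submodule R (M (n+1))) =
        Submodule.map (φ (n+1)) (I ^ (n+1) • ⊤ : Submodule R F) := by
      rw [Submodule.map_smul'', Submodule.map_top,
        LinearMap.range_eq_top.mpr (hφsurj (n+1))]
    rw [h1, hker n, h2, Submodule.comap_map_eq, sup_comm]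
  have hKmono : ∀ {a b : ℕ}, a ≤ b → K b ≤ K a := by
    intro a b hab
    induction b with
    | zero => rw [Nat.le_zero.mp hab]
    | succ b ih =>
      rcases Nat.lt_or_ge a (b+1) with h | h
      · exact le_trans (hK b ▸ le_sup_left) (ih (Nat.lt_succ_iff.mp h))
      · rw [Nat.le_antisymm hab h]
  have hIK : ∀ n, (I ^ (n + 1) • ⊤ : Submodule R F) ≤ K n := fun n => hK n ▸ le_sup_right
  set Kinf : Submodule R F := ⨅ n, K n with hKinf
  -- the key completeness step
  have hkey : ∀ n, K n ≤ Kinf ⊔ (I ^ (n + 1) • ⊤ : Submodule R F) := by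
    intro n x hx
    -- construct the Cauchy sequence
    have step : ∀ k (y : F), y ∈ K (n + k) →
        ∃ z : F, z ∈ K (n + k + 1) ∧ y - z ∈ (I ^ (n + k + 1) • ⊤ : Submodule R F) := by
      intro k y hy
      rw [hK (n + k)] at hy
      obtain ⟨a, ha, b, hb, hab⟩ := Submodule.mem_sup.mp hy
      exact ⟨a, ha, by rw [← hab]; simpa using hb⟩
    choose Z hZ1 hZ2 using step
    let seq : ∀ k : ℕ, {y : F // y ∈ K (n + k)} := fun k =>
      Nat.rec ⟨x, by simpa using hx⟩ (fun k p => ⟨Z k p.1 p.2, hZ1 k p.1 p.2⟩) k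
    have sdiff : ∀ k, (seq k).1 - (seq (k+1)).1 ∈ (I ^ (n + k + 1) • ⊤ : Submodule R F) :=
      fun k => hZ2 k (seq k).1 (seq k).2
    have hdiff : ∀ k l, k ≤ l →
        (seq k).1 - (seq l).1 ∈ (I ^ (n + k + 1) • ⊤ : Submodule R F) := by
      intro k l hkl
      induction l, hkl using Nat.le_induction with
      | base => simp
      | succ l hkl ih =>
        have : (seq k).1 - (seq (l+1)).1 =
            ((seq k).1 - (seq l).1) + ((seq l).1 - (seq (l+1)).1) := by abel
        rw [this]
        refine Submodule.add_mem _ ih ?_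
        exact Submodule.smul_mono_left
          (Ideal.pow_le_pow_right (by omega)) (sdiff l)
    have : ∃ y : F, ∀ k, (seq k).1 ≡ y [SMOD (I ^ k • ⊤ : Submodule R F)] := by
      apply (aux_precomplete_pi I ↥s).prec
      intro a b hab
      rw [SModEq.sub_mem]
      exact Submodule.smul_mono_left (Ideal.pow_le_pow_right (by omega)) (hdiff a b hab)
    obtain ⟨y, hy⟩ := this
    have hysub : ∀ k, (seq k).1 - y ∈ (I ^ k • ⊤ : Submodule R F) := by
      intro k; rw [← SModEq.sub_mem]; exact hy k
    have hyK : y ∈ Kinf := by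
      rw [hKinf]
      refine Submodule.mem_iInf _ |>.mpr fun m => ?_
      have h1 : (seq (m+1)).1 ∈ K m := hKmono (by omega) (seq (m+1)).2
      have h2 : (seq (m+1)).1 - y ∈ K m := hIK m (hysub (m+1))
      have : y = (seq (m+1)).1 - ((seq (m+1)).1 - y) := by abel
      rw [this]
      exact Submodule.sub_mem _ h1 h2
    have hxy : x - y ∈ (I ^ (n + 1) • ⊤ : Submodule R F) := by
      have h1 : x - (seq (n+1)).1 ∈ (I ^ (n + 1) • ⊤ : Submodule R F) := by
        have := hdiff 0 (n+1) (by omega)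
        exact this
      have h2 : (seq (n+1)).1 - y ∈ (I ^ (n + 1) • ⊤ : Submodule R F) := hysub (n+1)
      have : x - y = (x - (seq (n+1)).1) + ((seq (n+1)).1 - y) := by abel
      rw [this]; exact Submodule.add_mem _ h1 h2
    have : x = y + (x - y) := by abel
    rw [this]
    exact Submodule.add_mem_sup hyK hxy
  -- assemble
  refine ⟨ModuleCat.of R (F ⧸ Kinf), ?_, ?_⟩
  · have : Module.Finite R (F ⧸ Kinf) :=
      Module.Finite.of_surjective Kinf.mkQ (Submodule.mkQ_surjective Kinf)
    exact Module.finite_def.mp this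
  · have hle : ∀ n, Kinf ≤ LinearMap.ker (φ n) := fun n => iInf_le K n
    refine ⟨fun n => Kinf.liftQ (φ n) (hle n), ?_, ?_, ?_⟩
    · intro n x
      obtain ⟨r, hr⟩ := hφsurj n x
      exact ⟨Kinf.mkQ r, hr⟩
    · intro n
      rw [Submodule.ker_liftQ]
      apply le_antisymm
      · refine le_trans (Submodule.map_mono (hkey n)) ?_
        rw [Submodule.map_sup, Submodule.map_smul'', Submodule.map_top,
          Submodule.range_mkQ]
        have : Submodule.map Kinf.mkQ Kinf = ⊥ := by
          rw [eq_bot_iff]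
          rintro - ⟨y, hy, rfl⟩
          simpa using (Submodule.Quotient.mk_eq_zero Kinf).mpr hy
        rw [this, bot_sup_eq]
      · have : (I ^ (n + 1) • ⊤ : Submodule R (F ⧸ Kinf)) =
            Submodule.map Kinf.mkQ (I ^ (n + 1) • ⊤ : Submodule R F) := by
          rw [Submodule.map_smul'', Submodule.map_top, Submodule.range_mkQ]
        rw [this]
        exact Submodule.map_mono (hIK n)
    · intro n
      apply Submodule.linearMap_qext
      rw [LinearMap.comp_assoc, Submodule.liftQ_mkQ, Submodule.liftQ_mkQ, hφc]
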